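/- Projecting the set of solutions of a DBM system onto the difference of two variables yields exactly an interval: if D is a consistent normalized DBM over V ∪ {•} and t₁, t₂ ∈ V, then { ψ(t₂) − ψ(t₁) : ψ ∈ ⌉D⌈ } = [−D[t₂,t₁], D[t₁,t₂]] (intersected with ℚ, with infinite bounds interpreted as unboundedness). -/

import Mathlib

def dbmSol {V : Type*} (D : Option V → Option V → WithTop ℚ) : Set (V → ℚ) :=
  {ψ | ∀ x y : Option V, ((y.elim 0 ψ - x.elim 0 ψ : ℚ) : WithTop ℚ) ≤ D x y}

def pathWeights {V : Type*} (D : Option V → Option V → WithTop ℚ)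
    (x y : Option V) : Set (WithTop ℚ) :=
  {w | ∃ (k : ℕ) (c : Fin (k + 1) → Option V),
        c 0 = x ∧ c (Fin.last k) = y ∧
        w = ∑ i : Fin k, D (c i.castSucc) (c i.succ)}

section helpers

lemma dbm_exists_sol {V : Type*} [Fintype V]
    (E : Option V → Option V → WithTop ℚ)
    (htri : ∀ x y z, E x z ≤ E x y + E y z)
    (hdiag : ∀ x, 0 ≤ E x x) :
    (dbmSol E).Nonempty := by
  classical
  suffices h : ∀ S : Finset V, ∃ ψ : V → ℚ, ∀ x y : Option V,
      (∀ u ∈ x, u ∈ S) → (∀ u ∈ y, u ∈ S) →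
      ((y.elim 0 ψ - x.elim 0 ψ : ℚ) : WithTop ℚ) ≤ E x y by
    obtain ⟨ψ, hψ⟩ := h Finset.univ
    exact ⟨ψ, fun x y => hψ x y (fun _ _ => Finset.mem_univ _) (fun _ _ => Finset.mem_univ _)⟩
  intro S
  induction S using Finset.induction_on with
  | empty =>
    refine ⟨fun _ => 0, fun x y hx hy => ?_⟩
    cases x with
    | none =>
      cases y with
      | none => simpa using hdiag none
      | some u => exact absurd (hy u rfl) (by simp)
    | some u => exact absurd (hx u rfl) (by simp)
  | @insert v S hvS ih =>
    obtain ⟨ψ, hψ⟩ := ih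
    set w : Option V → ℚ := fun x => x.elim 0 ψ with hw
    set T : Finset (Option V) := insert none (S.image some) with hT
    have hmemT : ∀ x : Option V, x ∈ T ↔ (∀ u ∈ x, u ∈ S) := by
      intro x
      cases x with
      | none => simp [hT]
      | some u => simp [hT, Option.mem_def]
    -- choose c
    set Tl : Finset (Option V) := T.filter (fun x => E (some v) x ≠ ⊤) with hTl
    set Tu : Finset (Option V) := T.filter (fun x => E x (some v) ≠ ⊤) with hTu
    set lowf : Option V → ℚ := fun x => w x - (E (some v) x).untopD 0 with hlowf
    set upf : Option V → ℚ := fun x => w x + (E x (some v)).untopD 0 with hupf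
    set c : ℚ := if h : Tl.Nonempty then Tl.sup' h lowf
      else if h2 : Tu.Nonempty then Tu.inf' h2 upf else 0 with hc
    -- key cross inequality
    have hcross : ∀ x ∈ Tl, ∀ y ∈ Tu, lowf x ≤ upf y := by
      intro x hx y hy
      rw [hTl, Finset.mem_filter] at hx
      rw [hTu, Finset.mem_filter] at hy
      obtain ⟨q, hq⟩ := WithTop.ne_top_iff_exists.mp hx.2
      obtain ⟨r, hr⟩ := WithTop.ne_top_iff_exists.mp hy.2
      have h1 : ((w x - w y : ℚ) : WithTop ℚ) ≤ E y x := by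
        have := hψ y x ((hmemT y).mp hy.1) ((hmemT x).mp hx.1)
        simpa [hw] using this
      have h2 : E y x ≤ E y (some v) + E (some v) x := htri y (some v) x
      rw [← hq, ← hr] at h2
      have h3 : ((w x - w y : ℚ) : WithTop ℚ) ≤ ((r + q : ℚ) : WithTop ℚ) := by
        refine h1.trans (h2.trans ?_)
        rw [← WithTop.coe_add]
      have h4 : w x - w y ≤ r + q := WithTop.coe_le_coe.mp h3
      have hq' : (E (some v) x).untopD 0 = q := by rw [← hq]; rfl
      have hr' : (E y (some v)).untopD 0 = r := by rw [← hr]; rfl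
      rw [hlowf, hupf]
      simp only [hq', hr']
      linarith
    have hclow : ∀ x ∈ Tl, lowf x ≤ c := by
      intro x hx
      rw [hc]
      rw [dif_pos ⟨x, hx⟩]
      exact Finset.le_sup' _ hx
    have hcup : ∀ y ∈ Tu, c ≤ upf y := by
      intro y hy
      rw [hc]
      by_cases h : Tl.Nonempty
      · rw [dif_pos h]
        exact Finset.sup'_le _ _ (fun x hx => hcross x hx y hy)
      · rw [dif_neg h, dif_pos ⟨y, hy⟩]
        exact Finset.inf'_le _ hy
    -- the two constraint families
    have hlow : ∀ x ∈ T, ((w x - c : ℚ) : WithTop ℚ) ≤ E (some v) x := by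
      intro x hx
      by_cases h : E (some v) x = ⊤
      · simp [h]
      · obtain ⟨q, hq⟩ := WithTop.ne_top_iff_exists.mp h
        have hxl : x ∈ Tl := by rw [hTl, Finset.mem_filter]; exact ⟨hx, h⟩
        have hq' : (E (some v) x).untopD 0 = q := by rw [← hq]; rfl
        have this : w x - q ≤ c := by simpa [hlowf, hq'] using hclow x hxl
        rw [← hq, WithTop.coe_le_coe]
        linarith
    have hup : ∀ y ∈ T, ((c - w y : ℚ) : WithTop ℚ) ≤ E y (some v) := by
      intro y hy
      by_cases h : E y (some v) = ⊤
      · simp [h]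
      · obtain ⟨r, hr⟩ := WithTop.ne_top_iff_exists.mp h
        have hyu : y ∈ Tu := by rw [hTu, Finset.mem_filter]; exact ⟨hy, h⟩
        have hr' : (E y (some v)).untopD 0 = r := by rw [← hr]; rfl
        have this : c ≤ w y + r := by simpa [hupf, hr'] using hcup y hyu
        rw [← hr, WithTop.coe_le_coe]
        linarith
    refine ⟨Function.update ψ v c, fun x y hx hy => ?_⟩
    have hwup : ∀ z : Option V, (∀ u ∈ z, u ∈ S) →
        (z.elim 0 (Function.update ψ v c) : ℚ) = w z := by
      intro z hz
      cases z with
      | none => rfl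
      | some u =>
        have : u ∈ S := hz u rfl
        have : u ≠ v := fun h => hvS (h ▸ this)
        simp [hw, Function.update_of_ne this]
    by_cases hxv : x = some v
    · by_cases hyv : y = some v
      · subst hxv; subst hyv
        simpa using hdiag (some v)
      · have hy' : ∀ u ∈ y, u ∈ S := by
          intro u hu
          have := hy u hu
          rw [Finset.mem_insert] at this
          rcases this with h | h
          · exact absurd (hu ▸ h ▸ rfl : y = some v) hyv
          · exact h
        subst hxv
        rw [hwup y hy']
        have hxe : (Option.elim (some v) 0 (Function.update ψ v c) : ℚ) = c := by
          simp [Function.update_self]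
        rw [hxe]
        exact hlow y ((hmemT y).mpr hy')
    · have hx' : ∀ u ∈ x, u ∈ S := by
        intro u hu
        have := hx u hu
        rw [Finset.mem_insert] at this
        rcases this with h | h
        · exact absurd (hu ▸ h ▸ rfl : x = some v) hxv
        · exact h
      by_cases hyv : y = some v
      · subst hyv
        rw [hwup x hx']
        have hye : (Option.elim (some v) 0 (Function.update ψ v c) : ℚ) = c := by
          simp [Function.update_self]
        rw [hye]
        exact hup x ((hmemT x).mpr hx')
      · have hy' : ∀ u ∈ y, u ∈ S := by
          intro u hu
          have := hy u hu
          rw [Finset.mem_insert] at this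
          rcases this with h | h
          · exact absurd (hu ▸ h ▸ rfl : y = some v) hyv
          · exact h
        rw [hwup x hx', hwup y hy']
        exact hψ x y hx' hy'

end helpers

/-- for a consistent normalized DBM, the projection of the
solution set onto the difference `t₂ − t₁` is exactly the interval
`[−D[t₂,t₁], D[t₁,t₂]]` (infinite bounds meaning unboundedness). -/
theorem dbm_projection_interval {V : Type*} [Fintype V]
    (D : Option V → Option V → WithTop ℚ)
    (hcons : (dbmSol D).Nonempty)
    (hnorm : ∀ x y : Option V, IsLeast (pathWeights D x y) (D x y))
    (t₁ t₂ : V) :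
    {d : ℚ | ∃ ψ ∈ dbmSol D, d = ψ t₂ - ψ t₁} =
      {d : ℚ | ((-d : ℚ) : WithTop ℚ) ≤ D (some t₂) (some t₁) ∧
               ((d : ℚ) : WithTop ℚ) ≤ D (some t₁) (some t₂)} := by
  obtain ⟨ψ₀, hψ₀⟩ := hcons
  have Ddiag : ∀ x : Option V, D x x = 0 := by
    intro x
    refine le_antisymm ((hnorm x x).2 ⟨0, fun _ => x, rfl, rfl, by simp⟩) ?_
    simpa using hψ₀ x x
  have Dtri : ∀ x y z : Option V, D x z ≤ D x y + D y z := by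
    intro x y z
    refine (hnorm x z).2 ⟨2, ![x, y, z], rfl, rfl, ?_⟩
    simp [Fin.sum_univ_two]
  ext d
  simp only [Set.mem_setOf_eq]
  constructor
  · rintro ⟨ψ, hψ, rfl⟩
    constructor
    · have := hψ (some t₂) (some t₁)
      simpa [neg_sub] using this
    · simpa using hψ (some t₁) (some t₂)
  · rintro ⟨h1, h2⟩
    set E : Option V → Option V → WithTop ℚ := fun x y =>
      min (D x y) (min (D x (some t₁) + (d : ℚ) + D (some t₂) y)
        (D x (some t₂) + ((-d : ℚ) : WithTop ℚ) + D (some t₁) y)) with hE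
    have hdd : ((-d : ℚ) : WithTop ℚ) + ((d : ℚ) : WithTop ℚ) = 0 := by
      rw [← WithTop.coe_add]; norm_num
    have hdd' : ((d : ℚ) : WithTop ℚ) + ((-d : ℚ) : WithTop ℚ) = 0 := by
      rw [← WithTop.coe_add]; norm_num
    have eA : ∀ x z, E x z ≤ D x z := fun x z => min_le_left _ _
    have eB : ∀ x z, E x z ≤ D x (some t₁) + (d : ℚ) + D (some t₂) z :=
      fun x z => le_trans (min_le_right _ _) (min_le_left _ _)
    have eC : ∀ x z, E x z ≤ D x (some t₂) + ((-d : ℚ) : WithTop ℚ) + D (some t₁) z :=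
      fun x z => le_trans (min_le_right _ _) (min_le_right _ _)
    have htri : ∀ x y z, E x z ≤ E x y + E y z := by
      intro x y z
      rcases min_choice (D x y) (min (D x (some t₁) + (d : ℚ) + D (some t₂) y)
          (D x (some t₂) + ((-d : ℚ) : WithTop ℚ) + D (some t₁) y)) with hx | hx
      · rcases min_choice (D y z) (min (D y (some t₁) + (d : ℚ) + D (some t₂) z)
            (D y (some t₂) + ((-d : ℚ) : WithTop ℚ) + D (some t₁) z)) with hy | hy
        · -- A + A
          rw [hE]; dsimp only; rw [hx, hy]
          exact le_trans (eA x z) (Dtri x y z)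
        · rcases min_choice (D y (some t₁) + (d : ℚ) + D (some t₂) z)
              (D y (some t₂) + ((-d : ℚ) : WithTop ℚ) + D (some t₁) z) with hy2 | hy2
          · -- A + B
            rw [hE]; dsimp only; rw [hx, hy, hy2]
            calc E x z ≤ D x (some t₁) + (d : ℚ) + D (some t₂) z := eB x z
              _ ≤ (D x y + D y (some t₁)) + (d : ℚ) + D (some t₂) z := by
                  gcongr; exact Dtri x y (some t₁)
              _ = D x y + (D y (some t₁) + (d : ℚ) + D (some t₂) z) := by abel
          · -- A + C
            rw [hE]; dsimp only; rw [hx, hy, hy2]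
            calc E x z ≤ D x (some t₂) + ((-d : ℚ) : WithTop ℚ) + D (some t₁) z := eC x z
              _ ≤ (D x y + D y (some t₂)) + ((-d : ℚ) : WithTop ℚ) + D (some t₁) z := by
                  gcongr; exact Dtri x y (some t₂)
              _ = D x y + (D y (some t₂) + ((-d : ℚ) : WithTop ℚ) + D (some t₁) z) := by abel
      · rcases min_choice (D x (some t₁) + (d : ℚ) + D (some t₂) y)
            (D x (some t₂) + ((-d : ℚ) : WithTop ℚ) + D (some t₁) y) with hx2 | hx2
        · -- first is B
          rcases min_choice (D y z) (min (D y (some t₁) + (d : ℚ) + D (some t₂) z)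
              (D y (some t₂) + ((-d : ℚ) : WithTop ℚ) + D (some t₁) z)) with hy | hy
          · -- B + A
            rw [hE]; dsimp only; rw [hx, hx2, hy]
            calc E x z ≤ D x (some t₁) + (d : ℚ) + D (some t₂) z := eB x z
              _ ≤ D x (some t₁) + (d : ℚ) + (D (some t₂) y + D y z) := by
                  gcongr; exact Dtri _ _ _
              _ = (D x (some t₁) + (d : ℚ) + D (some t₂) y) + D y z := by abel
          · rcases min_choice (D y (some t₁) + (d : ℚ) + D (some t₂) z)
                (D y (some t₂) + ((-d : ℚ) : WithTop ℚ) + D (some t₁) z) with hy2 | hy2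
            · -- B + B
              rw [hE]; dsimp only; rw [hx, hx2, hy, hy2]
              calc E x z ≤ D x (some t₁) + (d : ℚ) + D (some t₂) z := eB x z
                _ = D x (some t₁) + (d : ℚ) + (((-d : ℚ) : WithTop ℚ) + (d : ℚ)) + D (some t₂) z := by
                    rw [hdd]; abel
                _ ≤ D x (some t₁) + (d : ℚ) + (D (some t₂) (some t₁) + (d : ℚ)) + D (some t₂) z := by
                    gcongr
                _ ≤ D x (some t₁) + (d : ℚ) + ((D (some t₂) y + D y (some t₁)) + (d : ℚ)) + D (some t₂) z := by
                    gcongr; exact Dtri _ _ _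
                _ = (D x (some t₁) + (d : ℚ) + D (some t₂) y) +
                    (D y (some t₁) + (d : ℚ) + D (some t₂) z) := by abel
            · -- B + C
              rw [hE]; dsimp only; rw [hx, hx2, hy, hy2]
              have h0 : (0 : WithTop ℚ) ≤ D (some t₂) y + D y (some t₂) := by
                rw [← Ddiag (some t₂)]; exact Dtri _ _ _
              calc E x z ≤ D x z := eA x z
                _ ≤ D x (some t₁) + D (some t₁) z := Dtri _ _ _
                _ = D x (some t₁) + ((d : ℚ) + ((-d : ℚ) : WithTop ℚ)) + 0 + D (some t₁) z := by
                    rw [hdd']; abel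
                _ ≤ D x (some t₁) + ((d : ℚ) + ((-d : ℚ) : WithTop ℚ)) +
                    (D (some t₂) y + D y (some t₂)) + D (some t₁) z := by gcongr
                _ = (D x (some t₁) + (d : ℚ) + D (some t₂) y) +
                    (D y (some t₂) + ((-d : ℚ) : WithTop ℚ) + D (some t₁) z) := by abel
        · -- first is C
          rcases min_choice (D y z) (min (D y (some t₁) + (d : ℚ) + D (some t₂) z)
              (D y (some t₂) + ((-d : ℚ) : WithTop ℚ) + D (some t₁) z)) with hy | hy
          · -- C + A
            rw [hE]; dsimp only; rw [hx, hx2, hy]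
            calc E x z ≤ D x (some t₂) + ((-d : ℚ) : WithTop ℚ) + D (some t₁) z := eC x z
              _ ≤ D x (some t₂) + ((-d : ℚ) : WithTop ℚ) + (D (some t₁) y + D y z) := by
                  gcongr; exact Dtri _ _ _
              _ = (D x (some t₂) + ((-d : ℚ) : WithTop ℚ) + D (some t₁) y) + D y z := by abel
          · rcases min_choice (D y (some t₁) + (d : ℚ) + D (some t₂) z)
                (D y (some t₂) + ((-d : ℚ) : WithTop ℚ) + D (some t₁) z) with hy2 | hy2
            · -- C + B
              rw [hE]; dsimp only; rw [hx, hx2, hy, hy2]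
              have h0 : (0 : WithTop ℚ) ≤ D (some t₁) y + D y (some t₁) := by
                rw [← Ddiag (some t₁)]; exact Dtri _ _ _
              calc E x z ≤ D x z := eA x z
                _ ≤ D x (some t₂) + D (some t₂) z := Dtri _ _ _
                _ = D x (some t₂) + (((-d : ℚ) : WithTop ℚ) + (d : ℚ)) + 0 + D (some t₂) z := by
                    rw [hdd]; abel
                _ ≤ D x (some t₂) + (((-d : ℚ) : WithTop ℚ) + (d : ℚ)) +
                    (D (some t₁) y + D y (some t₁)) + D (some t₂) z := by gcongr
                _ = (D x (some t₂) + ((-d : ℚ) : WithTop ℚ) + D (some t₁) y) +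
                    (D y (some t₁) + (d : ℚ) + D (some t₂) z) := by abel
            · -- C + C
              rw [hE]; dsimp only; rw [hx, hx2, hy, hy2]
              calc E x z ≤ D x (some t₂) + ((-d : ℚ) : WithTop ℚ) + D (some t₁) z := eC x z
                _ = D x (some t₂) + ((-d : ℚ) : WithTop ℚ) +
                    (((d : ℚ) : WithTop ℚ) + ((-d : ℚ) : WithTop ℚ)) + D (some t₁) z := by
                    rw [hdd']; abel
                _ ≤ D x (some t₂) + ((-d : ℚ) : WithTop ℚ) +
                    (D (some t₁) (some t₂) + ((-d : ℚ) : WithTop ℚ)) + D (some t₁) z := by gcongr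
                _ ≤ D x (some t₂) + ((-d : ℚ) : WithTop ℚ) +
                    ((D (some t₁) y + D y (some t₂)) + ((-d : ℚ) : WithTop ℚ)) + D (some t₁) z := by
                    gcongr; exact Dtri _ _ _
                _ = (D x (some t₂) + ((-d : ℚ) : WithTop ℚ) + D (some t₁) y) +
                    (D y (some t₂) + ((-d : ℚ) : WithTop ℚ) + D (some t₁) z) := by abel
    have hdiag : ∀ x, 0 ≤ E x x := by
      intro x
      refine le_min (by rw [Ddiag x]) (le_min ?_ ?_)
      · calc (0 : WithTop ℚ) = ((-d : ℚ) : WithTop ℚ) + (d : ℚ) := hdd.symm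
          _ ≤ D (some t₂) (some t₁) + (d : ℚ) := by gcongr
          _ ≤ (D (some t₂) x + D x (some t₁)) + (d : ℚ) := by gcongr; exact Dtri _ _ _
          _ = D x (some t₁) + (d : ℚ) + D (some t₂) x := by abel
      · calc (0 : WithTop ℚ) = ((d : ℚ) : WithTop ℚ) + ((-d : ℚ) : WithTop ℚ) := hdd'.symm
          _ ≤ D (some t₁) (some t₂) + ((-d : ℚ) : WithTop ℚ) := by gcongr
          _ ≤ (D (some t₁) x + D x (some t₂)) + ((-d : ℚ) : WithTop ℚ) := by
              gcongr; exact Dtri _ _ _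
          _ = D x (some t₂) + ((-d : ℚ) : WithTop ℚ) + D (some t₁) x := by abel
    obtain ⟨ψ, hψE⟩ := dbm_exists_sol E htri hdiag
    refine ⟨ψ, fun x y => (hψE x y).trans (eA x y), ?_⟩
    have u1 : ((ψ t₂ - ψ t₁ : ℚ) : WithTop ℚ) ≤ (d : ℚ) := by
      refine le_trans (by simpa using hψE (some t₁) (some t₂)) ?_
      refine le_trans (eB (some t₁) (some t₂)) ?_
      rw [Ddiag, Ddiag, zero_add, add_zero]
    have u2 : ((ψ t₁ - ψ t₂ : ℚ) : WithTop ℚ) ≤ ((-d : ℚ) : WithTop ℚ) := by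
      refine le_trans (by simpa using hψE (some t₂) (some t₁)) ?_
      refine le_trans (eC (some t₂) (some t₁)) ?_
      rw [Ddiag, Ddiag, zero_add, add_zero]
    have v1 := WithTop.coe_le_coe.mp u1
    have v2 := WithTop.coe_le_coe.mp u2
    linarith
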